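/- Logarithmic divergence of the null-form sum: for every m ∈ ℤ² \ {0} there exists c > 0 such that for all N ≥ 2, Σ_{k ∈ ℤ², k ≠ 0, k ≠ ±m, ‖k‖ ≤ N, ‖k+m‖ ≤ N} (k₁ m₂ - k₂ m₁)² / (‖k‖² ‖k+m‖²) ≥ c log N - 1/c. -/

import Mathlib

set_option maxHeartbeats 1000000

noncomputable def znorm (k : ℤ × ℤ) : ℝ :=
  Real.sqrt ((k.1 : ℝ)^2 + (k.2 : ℝ)^2)

lemma znorm_sq (k : ℤ × ℤ) : znorm k ^ 2 = ((k.1 : ℝ)^2 + (k.2 : ℝ)^2) :=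
  Real.sq_sqrt (by positivity)


lemma aux_norm1 (a b Mz B N : ℤ) (hb : b ≤ B) (hb1 : 1 ≤ b) (hab : a^2 ≤ b^2)
    (hMz : 1 ≤ Mz) (hN0 : 0 ≤ N) (h3MB : B*(3*Mz) ≤ N) : (a^2+b^2)*Mz ≤ N^2 := by
  have h0b : (0:ℤ) ≤ b := by linarith
  have h0B : (0:ℤ) ≤ B := by linarith
  have h0Mz : (0:ℤ) ≤ Mz := by linarith
  have hbsq : b^2 ≤ B^2 := by nlinarith
  have hNsq : 9*Mz^2*B^2 ≤ N^2 := by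
    nlinarith [mul_nonneg (sub_nonneg.mpr h3MB)
      (add_nonneg hN0 (mul_nonneg h0B (by linarith : (0:ℤ) ≤ 3*Mz)))]
  have hbig : 9*Mz*B^2 ≤ N^2 := by
    nlinarith [mul_nonneg (mul_nonneg h0Mz (sub_nonneg.mpr hMz)) (sq_nonneg B)]
  nlinarith [mul_le_mul_of_nonneg_right hbsq h0Mz, mul_le_mul_of_nonneg_right hab h0Mz,
    mul_nonneg (sq_nonneg B) h0Mz]

lemma aux_norm2 (a b Mz B N : ℤ) (hb : b ≤ B) (hb1 : 1 ≤ b) (ha1 : -b ≤ a) (ha2 : a ≤ b)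
    (hMz : 1 ≤ Mz) (hN0 : 0 ≤ N) (h3MB : B*(3*Mz) ≤ N) : ((a+1)^2+b^2)*Mz ≤ N^2 := by
  have h0b : (0:ℤ) ≤ b := by linarith
  have h0B : (0:ℤ) ≤ B := by linarith
  have h0Mz : (0:ℤ) ≤ Mz := by linarith
  have hbsq : b^2 ≤ B^2 := by nlinarith
  have hNsq : 9*Mz^2*B^2 ≤ N^2 := by
    nlinarith [mul_nonneg (sub_nonneg.mpr h3MB)
      (add_nonneg hN0 (mul_nonneg h0B (by linarith : (0:ℤ) ≤ 3*Mz)))]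
  have hbig : 9*Mz*B^2 ≤ N^2 := by
    nlinarith [mul_nonneg (mul_nonneg h0Mz (sub_nonneg.mpr hMz)) (sq_nonneg B)]
  have h4 : (a+1)^2 ≤ 4*b^2 := by
    nlinarith [mul_nonneg (by linarith : (0:ℤ) ≤ 2*b - (a+1)) (by linarith : (0:ℤ) ≤ 2*b + (a+1))]
  nlinarith [mul_le_mul_of_nonneg_right hbsq h0Mz, mul_le_mul_of_nonneg_right h4 h0Mz,
    mul_nonneg (sq_nonneg B) h0Mz]

lemma aux_frac (a b M : ℝ) (hb : 1 ≤ b) (ha1 : -b ≤ a) (ha2 : a ≤ b) (hM : 1 ≤ M) :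
    1/(10*b^2) ≤ (b^2*M^2)/(((a^2+b^2)*M)*(((a+1)^2+b^2)*M)) := by
  have hd1 : (0:ℝ) < (a^2+b^2)*M := by nlinarith [sq_nonneg a]
  have hd2 : (0:ℝ) < ((a+1)^2+b^2)*M := by nlinarith [sq_nonneg (a+1)]
  rw [div_le_div_iff₀ (by nlinarith) (by positivity)]
  have k1 : a^2+b^2 ≤ 2*b^2 := by nlinarith
  have k2 : (a+1)^2+b^2 ≤ 5*b^2 := by nlinarith
  have k3 : (a^2+b^2) * ((a+1)^2+b^2) ≤ 10*b^4 := by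
    nlinarith [sq_nonneg a, sq_nonneg (a+1)]
  nlinarith [sq_nonneg M, mul_le_mul_of_nonneg_right k3 (sq_nonneg M)]

lemma aux_inj (m1 m2 a a' b b' : ℤ) (hm : m1 ≠ 0 ∨ m2 ≠ 0)
    (e1 : a*m1 - b*m2 = a'*m1 - b'*m2) (e2 : a*m2 + b*m1 = a'*m2 + b'*m1) :
    a = a' ∧ b = b' := by
  set u : ℤ := a - a' with hu
  set v : ℤ := b - b' with hv
  have h1 : (u^2 + v^2) * m1 = 0 := by rw [hu, hv]; linear_combination (a-a') * e1 + (b-b') * e2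
  have h2 : (u^2 + v^2) * m2 = 0 := by rw [hu, hv]; linear_combination (a-a') * e2 - (b-b') * e1
  have huv : u^2 + v^2 = 0 := by
    rcases hm with h | h
    · exact (mul_eq_zero.mp h1).resolve_right h
    · exact (mul_eq_zero.mp h2).resolve_right h
  constructor <;> nlinarith [sq_nonneg u, sq_nonneg v]

lemma harmonic_lower (n : ℕ) : Real.log (n+1) ≤ ∑ i ∈ Finset.range n, (1:ℝ)/(i+1) := by
  induction n with
  | zero => simp
  | succ n ih =>
    rw [Finset.sum_range_succ]
    have h2 : (0:ℝ) < ((n:ℝ) + 1 + 1) / (n + 1) := by positivity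
    have key : Real.log (((n:ℝ) + 1 + 1) / (n + 1)) ≤ 1 / (n + 1) := by
      have h3 : ((n:ℝ) + 1 + 1) / (n + 1) - 1 = 1 / (n+1) := by field_simp; ring
      linarith [Real.log_le_sub_one_of_pos h2]
    have hsplit : Real.log ((n:ℝ) + 1 + 1)
        = Real.log ((n:ℝ)+1) + Real.log (((n:ℝ)+1+1)/((n:ℝ)+1)) := by
      rw [Real.log_div (by positivity) (by positivity)]; ring
    push_cast
    push_cast at ih
    linarith

theorem nullform_sum_log_divergence (m : ℤ × ℤ) (hm : m ≠ 0) :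
    ∃ c > (0:ℝ), ∀ N : ℕ, 2 ≤ N →
      c * Real.log N - 1/c ≤
        ∑' k : {k : ℤ × ℤ // k ≠ 0 ∧ k ≠ m ∧ k ≠ -m ∧ znorm k ≤ N ∧ znorm (k + m) ≤ N},
          ((k.1.1 * m.2 - k.1.2 * m.1 : ℤ) : ℝ)^2
            / (znorm k.1 ^ 2 * znorm (k.1 + m) ^ 2) := by
  classical
  have hm' : m.1 ≠ 0 ∨ m.2 ≠ 0 := by
    by_contra h; push_neg at h; exact hm (Prod.ext h.1 h.2)
  set Mz : ℤ := m.1^2 + m.2^2 with hMzdef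
  clear_value Mz
  have hMz : 1 ≤ Mz := by
    rw [hMzdef]
    rcases hm' with h | h
    · have h1 := Int.one_le_abs h
      nlinarith [sq_nonneg m.2, sq_abs m.1]
    · have h1 := Int.one_le_abs h
      nlinarith [sq_nonneg m.1, sq_abs m.2]
  have hMR : (1:ℝ) ≤ (Mz:ℝ) := by exact_mod_cast hMz
  have hlog3 : 0 < Real.log (3*(Mz:ℝ)) := Real.log_pos (by linarith)
  set c : ℝ := min (1/5) (5 / Real.log (3*(Mz:ℝ))) with hcdef
  have hcpos : 0 < c := lt_min (by norm_num) (by positivity)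
  refine ⟨c, hcpos, ?_⟩
  intro N hN
  set f : ℤ × ℤ → ℝ := fun k =>
    ((k.1 * m.2 - k.2 * m.1 : ℤ) : ℝ)^2 / (znorm k ^ 2 * znorm (k + m) ^ 2) with hfdef
  have hfnonneg : ∀ k, 0 ≤ f k := fun k => div_nonneg (by positivity) (by positivity)
  set s : Set (ℤ × ℤ) :=
    {k | k ≠ 0 ∧ k ≠ m ∧ k ≠ -m ∧ znorm k ≤ N ∧ znorm (k + m) ≤ N} with hsdef
  -- finiteness of s
  have hfin : s.Finite := by
    apply Set.Finite.subset (Set.finite_Icc (-(N:ℤ), -(N:ℤ)) ((N:ℤ), (N:ℤ)))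
    intro k hk
    obtain ⟨-, -, -, hk1, -⟩ := hk
    have h0 : 0 ≤ znorm k := Real.sqrt_nonneg _
    have h1 : znorm k ^ 2 ≤ (N:ℝ)^2 := by nlinarith
    rw [znorm_sq] at h1
    have i1 : k.1^2 ≤ (N:ℤ)^2 := by
      have : (k.1:ℝ)^2 ≤ (N:ℝ)^2 := by nlinarith [sq_nonneg (k.2:ℝ)]
      exact_mod_cast this
    have i2 : k.2^2 ≤ (N:ℤ)^2 := by
      have : (k.2:ℝ)^2 ≤ (N:ℝ)^2 := by nlinarith [sq_nonneg (k.1:ℝ)]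
      exact_mod_cast this
    have hN0 : (0:ℤ) ≤ (N:ℤ) := Int.ofNat_nonneg N
    rw [Set.mem_Icc, Prod.le_def, Prod.le_def]
    refine ⟨⟨?_, ?_⟩, ?_, ?_⟩ <;> simp only [] <;> nlinarith
  have hsummable : Summable (s.indicator f) :=
    summable_of_finite_support (hfin.subset Set.support_indicator_subset)
  have htsum : ∀ S : Finset (ℤ × ℤ), (↑S : Set (ℤ × ℤ)) ⊆ s →
      ∑ k ∈ S, f k ≤ ∑' k : s, f ↑k := by
    intro S hS
    rw [tsum_subtype]
    calc ∑ k ∈ S, f k = ∑ k ∈ S, s.indicator f k :=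
          Finset.sum_congr rfl fun k hk => (Set.indicator_of_mem (hS hk) f).symm
      _ ≤ ∑' k, s.indicator f k :=
          Summable.sum_le_tsum S (fun k _ => Set.indicator_nonneg (fun a _ => hfnonneg a) k) hsummable
  -- the parametrized family
  set Mn : ℕ := Mz.toNat with hMndef
  clear_value Mn
  have hMnz : (Mn:ℤ) = Mz := by rw [hMndef]; exact Int.toNat_of_nonneg (by linarith)
  have hMnpos : 0 < Mn := by omega
  set B : ℕ := N / (3 * Mn) with hBdef
  clear_value B
  set ψ : (Σ _ : ℕ, ℤ) → ℤ × ℤ := fun x =>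
    (x.2 * m.1 - ((x.1:ℤ)+1) * m.2, x.2 * m.2 + ((x.1:ℤ)+1) * m.1) with hψdef
  set T : Finset (Σ _ : ℕ, ℤ) :=
    (Finset.range B).sigma (fun j => Finset.Icc (-((j:ℤ)+1)) ((j:ℤ)+1)) with hTdef
  -- basic identities
  have cross : ∀ x : (Σ _ : ℕ, ℤ), (ψ x).1 * m.2 - (ψ x).2 * m.1 = -((x.1:ℤ)+1) * Mz := by
    intro x; simp only [hψdef, hMzdef]; ring
  have nsq1 : ∀ x : (Σ _ : ℕ, ℤ), (ψ x).1^2 + (ψ x).2^2 = (x.2^2 + ((x.1:ℤ)+1)^2) * Mz := by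
    intro x; simp only [hψdef, hMzdef]; ring
  have nsq2 : ∀ x : (Σ _ : ℕ, ℤ), ((ψ x)+m).1^2 + ((ψ x)+m).2^2
      = ((x.2+1)^2 + ((x.1:ℤ)+1)^2) * Mz := by
    intro x; simp only [hψdef, hMzdef, Prod.fst_add, Prod.snd_add]; ring
  -- membership of the family in s
  have h3MB : (B:ℤ) * (3 * Mz) ≤ (N:ℤ) := by
    have := Nat.div_mul_le_self N (3 * Mn)
    have h2 : (B * (3 * Mn) : ℤ) ≤ (N:ℤ) := by rw [hBdef]; exact_mod_cast this
    push_cast [hMnz] at h2 ⊢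
    linarith
  have hmemT : ∀ x ∈ T, (x.1:ℤ) + 1 ≤ (B:ℤ) ∧ -((x.1:ℤ)+1) ≤ x.2 ∧ x.2 ≤ (x.1:ℤ)+1 := by
    intro x hx
    simp only [hTdef, Finset.mem_sigma, Finset.mem_range, Finset.mem_Icc] at hx
    exact ⟨by exact_mod_cast hx.1, hx.2.1, hx.2.2⟩
  have hmem : ∀ x ∈ T, ψ x ∈ s := by
    intro x hx
    obtain ⟨hb, ha1, ha2⟩ := hmemT x hx
    have hcx := cross x
    have h1x := nsq1 x
    have h2x := nsq2 x
    have hb1 : (1:ℤ) ≤ (x.1:ℤ) + 1 := by omega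
    have hab : x.2^2 ≤ ((x.1:ℤ)+1)^2 := by nlinarith
    have hN0 : (0:ℤ) ≤ (N:ℤ) := Int.ofNat_nonneg N
    have hcrossne : (ψ x).1 * m.2 - (ψ x).2 * m.1 ≠ 0 := by
      rw [hcx]; intro h
      nlinarith [mul_pos (show (0:ℤ) < (x.1:ℤ)+1 by linarith) (show (0:ℤ) < Mz by linarith)]
    have hN2a : (ψ x).1^2 + (ψ x).2^2 ≤ (N:ℤ)^2 := by
      rw [h1x]
      exact aux_norm1 x.2 ((x.1:ℤ)+1) Mz B N hb hb1 hab hMz hN0 h3MB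
    have hN2b : ((ψ x)+m).1^2 + ((ψ x)+m).2^2 ≤ (N:ℤ)^2 := by
      rw [h2x]
      exact aux_norm2 x.2 ((x.1:ℤ)+1) Mz B N hb hb1 ha1 ha2 hMz hN0 h3MB
    have hzn : znorm (ψ x) ≤ (N:ℝ) := by
      have : ((ψ x).1:ℝ)^2 + ((ψ x).2:ℝ)^2 ≤ ((N:ℝ))^2 := by exact_mod_cast hN2a
      calc znorm (ψ x) ≤ Real.sqrt ((N:ℝ)^2) := Real.sqrt_le_sqrt this
        _ = N := Real.sqrt_sq (by positivity)
    have hzn2 : znorm (ψ x + m) ≤ (N:ℝ) := by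
      have : ((ψ x + m).1:ℝ)^2 + ((ψ x + m).2:ℝ)^2 ≤ ((N:ℝ))^2 := by exact_mod_cast hN2b
      calc znorm (ψ x + m) ≤ Real.sqrt ((N:ℝ)^2) := Real.sqrt_le_sqrt this
        _ = N := Real.sqrt_sq (by positivity)
    refine ⟨?_, ?_, ?_, hzn, hzn2⟩
    · intro heq; apply hcrossne; rw [heq]; simp
    · intro heq; apply hcrossne; rw [heq]; ring
    · intro heq; apply hcrossne; rw [heq]; simp [Prod.fst_neg, Prod.snd_neg]; ring
  -- injectivity
  have hinj : ∀ x ∈ T, ∀ y ∈ T, ψ x = ψ y → x = y := by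
    intro x _ y _ hxy
    obtain ⟨j, a⟩ := x
    obtain ⟨j', a'⟩ := y
    simp only [hψdef, Prod.mk.injEq] at hxy
    obtain ⟨e1, e2⟩ := hxy
    obtain ⟨ha, hb⟩ := aux_inj m.1 m.2 a a' ((j:ℤ)+1) ((j':ℤ)+1) hm' e1 e2
    have hj : j = j' := by omega
    subst hj
    subst ha
    rfl
  -- term lower bound
  have hterm : ∀ x ∈ T, 1/(10*((x.1:ℝ)+1)^2) ≤ f (ψ x) := by
    intro x hx
    obtain ⟨hb, ha1, ha2⟩ := hmemT x hx
    have c1 := cross x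
    have c2 := nsq1 x
    have c3 := nsq2 x
    have hb1 : (1:ℤ) ≤ (x.1:ℤ) + 1 := by omega
    have hbR : (1:ℝ) ≤ ((x.1:ℤ):ℝ) + 1 := by exact_mod_cast hb1
    have haR1 : -(((x.1:ℤ):ℝ)+1) ≤ ((x.2:ℤ):ℝ) := by exact_mod_cast ha1
    have haR2 : ((x.2:ℤ):ℝ) ≤ ((x.1:ℤ):ℝ)+1 := by exact_mod_cast ha2
    have hfval : f (ψ x) = ((((x.1:ℤ):ℝ)+1)^2 * (Mz:ℝ)^2) /
        (((((x.2:ℤ):ℝ)^2+(((x.1:ℤ):ℝ)+1)^2)*(Mz:ℝ)) * (((((x.2:ℤ):ℝ)+1)^2+(((x.1:ℤ):ℝ)+1)^2)*(Mz:ℝ))) := by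
      simp only [hfdef, znorm_sq]
      rw [c1]
      have e2 : (((ψ x).1:ℝ))^2 + (((ψ x).2:ℝ))^2
          = (((x.2:ℤ):ℝ)^2+(((x.1:ℤ):ℝ)+1)^2)*(Mz:ℝ) := by
        have h := congrArg (fun z : ℤ => (z:ℝ)) c2
        push_cast at h ⊢
        linarith [h]
      have e3 : (((ψ x + m).1:ℝ))^2 + (((ψ x + m).2:ℝ))^2
          = ((((x.2:ℤ):ℝ)+1)^2+(((x.1:ℤ):ℝ)+1)^2)*(Mz:ℝ) := by
        have h := congrArg (fun z : ℤ => (z:ℝ)) c3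
        push_cast at h ⊢
        linarith [h]
      rw [e2, e3]
      push_cast
      ring
    rw [hfval]
    have hbb : ((x.1:ℝ)+1) = ((x.1:ℤ):ℝ)+1 := by push_cast; ring
    rw [hbb]
    exact aux_frac ((x.2:ℤ):ℝ) (((x.1:ℤ):ℝ)+1) (Mz:ℝ) hbR haR1 haR2 hMR
  -- assemble the sum
  set S : Finset (ℤ × ℤ) := T.image ψ with hSdef
  have hSsub : (↑S : Set (ℤ × ℤ)) ⊆ s := by
    intro k hk
    simp only [hSdef, Finset.coe_image, Set.mem_image, Finset.mem_coe] at hk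
    obtain ⟨x, hx, rfl⟩ := hk
    exact hmem x hx
  have hsum1 : ∑ x ∈ T, f (ψ x) = ∑ k ∈ S, f k := (Finset.sum_image hinj).symm
  have hsum2 : ∑ j ∈ Finset.range B, (1:ℝ)/(5*((j:ℝ)+1)) ≤ ∑ x ∈ T, f (ψ x) := by
    rw [hTdef, Finset.sum_sigma]
    apply Finset.sum_le_sum
    intro j hj
    have hstep : ∀ a ∈ Finset.Icc (-((j:ℤ)+1)) ((j:ℤ)+1),
        1/(10*((j:ℝ)+1)^2) ≤ f (ψ ⟨j, a⟩) := by
      intro a ha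
      refine hterm ⟨j, a⟩ ?_
      simp only [hTdef, Finset.mem_sigma, Finset.mem_range]
      exact ⟨Finset.mem_range.mp hj, ha⟩
    calc (1:ℝ)/(5*((j:ℝ)+1))
        ≤ (Finset.Icc (-((j:ℤ)+1)) ((j:ℤ)+1)).card • (1/(10*((j:ℝ)+1)^2)) := by
          have hcard : (Finset.Icc (-((j:ℤ)+1)) ((j:ℤ)+1)).card = 2*j+3 := by
            rw [Int.card_Icc]
            omega
          rw [hcard, nsmul_eq_mul]
          have hcast : ((2*j+3 : ℕ) : ℝ) = 2*(j:ℝ)+3 := by push_cast; ring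
          have hmul : (2*(j:ℝ)+3) * (1/(10*((j:ℝ)+1)^2)) = (2*(j:ℝ)+3)/(10*((j:ℝ)+1)^2) := by
            ring
          rw [hcast, hmul, div_le_div_iff₀ (by positivity) (by positivity)]
          nlinarith
      _ ≤ ∑ a ∈ Finset.Icc (-((j:ℤ)+1)) ((j:ℤ)+1), f (ψ ⟨j, a⟩) :=
          Finset.card_nsmul_le_sum _ _ _ hstep
  have hsum3 : (1/5) * Real.log (B+1) ≤ ∑ j ∈ Finset.range B, (1:ℝ)/(5*((j:ℝ)+1)) := by
    have := harmonic_lower B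
    have heq : ∑ j ∈ Finset.range B, (1:ℝ)/(5*((j:ℝ)+1))
        = (1/5) * ∑ j ∈ Finset.range B, (1:ℝ)/((j:ℝ)+1) := by
      rw [Finset.mul_sum]
      refine Finset.sum_congr rfl fun j _ => ?_
      have hj0 : ((j:ℝ)+1) ≠ 0 := by positivity
      field_simp
    rw [heq]
    push_cast at this ⊢
    linarith
  -- N/(3M) < B+1
  have hBlow : (N:ℝ) < ((B:ℝ)+1) * (3*(Mz:ℝ)) := by
    have h1 : N < (B+1) * (3*Mn) := by
      have hdm : 3*Mn*B + N % (3*Mn) = N := by rw [hBdef]; exact Nat.div_add_mod N (3*Mn)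
      have hmod : N % (3*Mn) < 3*Mn := Nat.mod_lt N (by omega)
      have hring : (B+1)*(3*Mn) = 3*Mn*B + 3*Mn := by ring
      rw [hring]
      have h3Mn : 0 < 3*Mn := by omega
      linarith
    have h2 : (N:ℝ) < ((B+1) * (3*Mn) : ℕ) := by exact_mod_cast h1
    have h3 : (((B+1) * (3*Mn) : ℕ) : ℝ) = ((B:ℝ)+1) * (3*((Mn:ℕ):ℝ)) := by push_cast; ring
    have h4 : ((Mn:ℕ):ℝ) = (Mz:ℝ) := by exact_mod_cast hMnz
    rw [h3, h4] at h2
    exact h2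
  have hlogB : Real.log (N:ℝ) - Real.log (3*(Mz:ℝ)) ≤ Real.log ((B:ℝ)+1) := by
    have hNpos : (0:ℝ) < (N:ℝ) := by
      have : (0:ℕ) < N := by omega
      exact_mod_cast this
    have h3M : (0:ℝ) < 3*(Mz:ℝ) := by linarith
    have hdiv : (N:ℝ)/(3*(Mz:ℝ)) ≤ (B:ℝ)+1 := by
      rw [div_le_iff₀ h3M]; linarith
    calc Real.log (N:ℝ) - Real.log (3*(Mz:ℝ)) = Real.log ((N:ℝ)/(3*(Mz:ℝ))) :=
          (Real.log_div (ne_of_gt hNpos) (ne_of_gt h3M)).symm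
      _ ≤ Real.log ((B:ℝ)+1) := Real.log_le_log (by positivity) hdiv
  -- final arithmetic
  have hlogN : 0 ≤ Real.log (N:ℝ) := Real.log_nonneg (by exact_mod_cast Nat.one_le_of_lt hN)
  have hc1 : c ≤ 1/5 := min_le_left _ _
  have hc2 : c ≤ 5 / Real.log (3*(Mz:ℝ)) := min_le_right _ _
  have hcinv : Real.log (3*(Mz:ℝ)) / 5 ≤ 1/c := by
    have := one_div_le_one_div_of_le hcpos hc2
    rwa [one_div_div] at this
  have final : c * Real.log N - 1/c ≤ ∑ k ∈ S, f k := by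
    have t1 : c * Real.log N ≤ (1/5) * Real.log N :=
      mul_le_mul_of_nonneg_right hc1 hlogN
    have t0 := le_trans hsum3 (le_of_le_of_eq hsum2 hsum1)
    have t4 : (1/5) * Real.log ((B:ℝ)+1) ≤ ∑ k ∈ S, f k := t0
    linarith [hcinv, hlogB]
  exact le_trans final (htsum S hSsub)
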